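/- For all ρ₁, ρ₂ > 0 and every v ∈ ℝ, one has |f_{ρ₁}(v) − f_{ρ₂}(v)| ≤ |ρ₁ − ρ₂|. -/

import Mathlib

/-- The smoothed absolute value `f_ρ`. -/
noncomputable def smoothAbs (ρ : ℝ) (v : ℝ) : ℝ :=
  if ρ ≤ |v| then |v| else ρ / 3 + (v ^ 2 / ρ ^ 2) * (ρ - |v| / 3)

lemma smoothAbs_eq (ρ v : ℝ) (hρ : 0 < ρ) (h : ¬ ρ ≤ |v|) :
    smoothAbs ρ v = |v| + (ρ - |v|) ^ 3 / (3 * ρ ^ 2) := by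
  rw [smoothAbs, if_neg h]
  field_simp
  linear_combination (|v| - 3 * ρ) * (sq_abs v)

lemma aux (a ρ₁ ρ₂ : ℝ) (ha : 0 ≤ a) (h1 : 0 < ρ₁) (h12 : ρ₁ ≤ ρ₂) (ha1 : a ≤ ρ₁) :
    (ρ₁ - a) ^ 3 / (3 * ρ₁ ^ 2) ≤ (ρ₂ - a) ^ 3 / (3 * ρ₂ ^ 2) ∧
      (ρ₂ - a) ^ 3 / (3 * ρ₂ ^ 2) - (ρ₁ - a) ^ 3 / (3 * ρ₁ ^ 2) ≤ ρ₂ - ρ₁ := by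
  have h2 : (0:ℝ) < ρ₂ := lt_of_lt_of_le h1 h12
  have hd1 : (0:ℝ) < 3 * ρ₁ ^ 2 := by positivity
  have hd2 : (0:ℝ) < 3 * ρ₂ ^ 2 := by positivity
  have hd : (0:ℝ) ≤ ρ₂ - ρ₁ := by linarith
  have hb : (0:ℝ) ≤ ρ₁ - a := by linarith
  have hc : (0:ℝ) ≤ ρ₁ + 2 * a := by linarith
  have he : (0:ℝ) ≤ 2 * ρ₁ - a := by linarith
  have hae : (0:ℝ) ≤ a * (2 * ρ₁ - a) := mul_nonneg ha he
  constructor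
  · rw [div_le_div_iff₀ hd1 hd2]
    have t1 : (0:ℝ) ≤ (ρ₂ - ρ₁) * (ρ₁ * (ρ₁ - a) ^ 2 * (ρ₁ + 2 * a)) :=
      mul_nonneg hd (mul_nonneg (mul_nonneg h1.le (sq_nonneg _)) hc)
    have t2 : (0:ℝ) ≤ (ρ₂ - ρ₁) ^ 2 * ((ρ₁ - a) * (2 * ρ₁ ^ 2 + a * (2 * ρ₁ - a))) :=
      mul_nonneg (sq_nonneg _) (mul_nonneg hb (by nlinarith [sq_nonneg ρ₁]))
    have t3 : (0:ℝ) ≤ (ρ₂ - ρ₁) ^ 3 * ρ₁ ^ 2 :=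
      mul_nonneg (pow_nonneg hd 3) (sq_nonneg _)
    nlinarith [t1, t2, t3]
  · rw [div_sub_div _ _ (ne_of_gt hd2) (ne_of_gt hd1), div_le_iff₀ (by positivity)]
    have s1 : (0:ℝ) ≤ (ρ₂ - ρ₁) * (ρ₁ * (3 * ρ₁ * (a * (2 * ρ₁ - a)) + 2 * (ρ₁ - a) ^ 3)) :=
      mul_nonneg hd (mul_nonneg h1.le (by positivity))
    have s2 : (0:ℝ) ≤ (ρ₂ - ρ₁) ^ 2 * (3 * ρ₁ ^ 2 * a + 3 * ρ₁ ^ 3 + (ρ₁ - a) ^ 3) :=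
      mul_nonneg (sq_nonneg _) (by positivity)
    have s3 : (0:ℝ) ≤ (ρ₂ - ρ₁) ^ 3 * (2 * ρ₁ ^ 2) :=
      mul_nonneg (pow_nonneg hd 3) (by positivity)
    nlinarith [s1, s2, s3, mul_pos h1 h2, sq_nonneg (ρ₁*ρ₂)]

lemma smoothAbs_mono_lip (ρ₁ ρ₂ : ℝ) (hρ₁ : 0 < ρ₁) (hρ₂ : 0 < ρ₂) (h12 : ρ₁ ≤ ρ₂) (v : ℝ) :
    smoothAbs ρ₁ v ≤ smoothAbs ρ₂ v ∧ smoothAbs ρ₂ v - smoothAbs ρ₁ v ≤ ρ₂ - ρ₁ := by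
  have ha : 0 ≤ |v| := abs_nonneg v
  by_cases h2 : ρ₂ ≤ |v|
  · have h1 : ρ₁ ≤ |v| := le_trans h12 h2
    rw [smoothAbs, if_pos h1, smoothAbs, if_pos h2]
    constructor <;> linarith
  · by_cases h1 : ρ₁ ≤ |v|
    · rw [smoothAbs, if_pos h1, smoothAbs_eq ρ₂ v hρ₂ h2]
      push_neg at h2
      have hd2 : (0:ℝ) < 3 * ρ₂ ^ 2 := by positivity
      have e1 : (0:ℝ) ≤ ρ₂ - |v| := by linarith
      constructor
      · nlinarith [div_nonneg (pow_nonneg e1 3) hd2.le]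
      · have key : (ρ₂ - |v|) ^ 3 / (3 * ρ₂ ^ 2) ≤ ρ₂ - ρ₁ := by
          rw [div_le_iff₀ hd2]
          have u1 : (0:ℝ) ≤ ((ρ₂ - ρ₁) - (ρ₂ - |v|)) * (ρ₂ - |v|) ^ 2 :=
            mul_nonneg (by linarith) (sq_nonneg _)
          have u2 : (0:ℝ) ≤ (ρ₂ - ρ₁) * (|v| * (2 * ρ₂ - |v|)) :=
            mul_nonneg (by linarith) (mul_nonneg ha (by linarith))
          have u3 : (0:ℝ) ≤ (ρ₂ - ρ₁) * (2 * ρ₂ ^ 2) :=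
            mul_nonneg (by linarith) (by positivity)
          nlinarith [u1, u2, u3]
        linarith
    · rw [smoothAbs_eq ρ₁ v hρ₁ h1, smoothAbs_eq ρ₂ v hρ₂ h2]
      push_neg at h1
      obtain ⟨hA, hB⟩ := aux |v| ρ₁ ρ₂ ha hρ₁ h12 h1.le
      constructor <;> linarith

theorem smoothAbs_estimate_two_rhos (ρ₁ ρ₂ : ℝ) (hρ₁ : 0 < ρ₁) (hρ₂ : 0 < ρ₂) (v : ℝ) :
    |smoothAbs ρ₁ v - smoothAbs ρ₂ v| ≤ |ρ₁ - ρ₂| := by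
  rcases le_total ρ₁ ρ₂ with h | h
  · obtain ⟨hA, hB⟩ := smoothAbs_mono_lip ρ₁ ρ₂ hρ₁ hρ₂ h v
    rw [abs_sub_comm, abs_sub_comm ρ₁ ρ₂, abs_of_nonneg (by linarith), abs_of_nonneg (by linarith)]
    linarith
  · obtain ⟨hA, hB⟩ := smoothAbs_mono_lip ρ₂ ρ₁ hρ₂ hρ₁ h v
    rw [abs_of_nonneg (by linarith), abs_of_nonneg (by linarith)]
    linarith
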